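/- Let A ∈ ℝ^{2n×2n} be symmetric positive definite, partitioned into n×n blocks as A = [[A₁₁, A₁₂],[A₁₂ᵀ, A₂₂]]. Then W := A₁₁⁻¹A₁₂ satisfies ‖W‖₂² ≤ ‖A₁₁⁻¹‖₂ · ‖A₂₂‖₂. -/

import Mathlib

open Matrix

/-- Spectral norm (ℓ² operator norm) of a real square matrix. -/
noncomputable def specNorm {m : Type*} [Fintype m] [DecidableEq m] (M : Matrix m m ℝ) : ℝ :=
  ‖LinearMap.toContinuousLinearMap (Matrix.toEuclideanLin M)‖

/-- Frobenius norm of a real square matrix. -/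
noncomputable def frobNorm {m : Type*} [Fintype m] (M : Matrix m m ℝ) : ℝ :=
  Real.sqrt (∑ i, ∑ j, (M i j) ^ 2)

/-- Spectral condition number κ₂(M) = ‖M⁻¹‖₂ ‖M‖₂. -/
noncomputable def cond2 {m : Type*} [Fintype m] [DecidableEq m] (M : Matrix m m ℝ) : ℝ :=
  specNorm M⁻¹ * specNorm M

/-- Spectral radius of a real square matrix (via its complex spectrum). -/
noncomputable def specRad {m : Type*} [Fintype m] [DecidableEq m] (M : Matrix m m ℝ) : ℝ :=
  (spectralRadius ℂ (M.map (Complex.ofReal ·))).toReal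

/-- Lower triangular predicate. -/
def LowerTri {k : ℕ} (M : Matrix (Fin k) (Fin k) ℝ) : Prop := ∀ i j, i < j → M i j = 0
/-- Upper triangular predicate. -/
def UpperTri {k : ℕ} (M : Matrix (Fin k) (Fin k) ℝ) : Prop := ∀ i j, j < i → M i j = 0
/-- Positive diagonal entries predicate. -/
def PosDiag {k : ℕ} (M : Matrix (Fin k) (Fin k) ℝ) : Prop := ∀ i, 0 < M i i

/-- The standard symplectic matrix J = [[0, I], [-I, 0]]. -/
noncomputable def Jmat (n : ℕ) : Matrix (Fin n ⊕ Fin n) (Fin n ⊕ Fin n) ℝ :=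
  fromBlocks 0 1 (-1) 0

/-- M is symplectic iff MᵀJM = J. -/
def IsSymplectic {n : ℕ} (M : Matrix (Fin n ⊕ Fin n) (Fin n ⊕ Fin n) ℝ) : Prop :=
  Mᵀ * Jmat n * M = Jmat n

/-- Ω(M) = MᵀJM − J, the loss of symplecticity. -/
noncomputable def Omega {n : ℕ} (M : Matrix (Fin n ⊕ Fin n) (Fin n ⊕ Fin n) ℝ) :
    Matrix (Fin n ⊕ Fin n) (Fin n ⊕ Fin n) ℝ :=
  Mᵀ * Jmat n * M - Jmat n

section Aux
variable {m : Type*} [Fintype m] [DecidableEq m]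

set_option linter.unusedSectionVars false

lemma inner_eq_dot (x y : m → ℝ) :
    (inner ℝ ((WithLp.equiv 2 (m → ℝ)).symm x) ((WithLp.equiv 2 (m → ℝ)).symm y) : ℝ) = x ⬝ᵥ y := by
  simp [PiLp.inner_apply, RCLike.inner_apply, dotProduct, mul_comm]

lemma norm_sq_eq_dot (x : m → ℝ) :
    ‖(WithLp.equiv 2 (m → ℝ)).symm x‖ ^ 2 = x ⬝ᵥ x := by
  rw [← real_inner_self_eq_norm_sq, inner_eq_dot]

lemma mulVec_normsq_le (M : Matrix m m ℝ) (x : m → ℝ) :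
    (M *ᵥ x) ⬝ᵥ (M *ᵥ x) ≤ specNorm M ^ 2 * (x ⬝ᵥ x) := by
  have h := (LinearMap.toContinuousLinearMap (Matrix.toEuclideanLin M)).le_opNorm
    ((WithLp.equiv 2 (m → ℝ)).symm x)
  have he : (LinearMap.toContinuousLinearMap (Matrix.toEuclideanLin M))
      ((WithLp.equiv 2 (m → ℝ)).symm x) = (WithLp.equiv 2 (m → ℝ)).symm (M *ᵥ x) := rfl
  rw [he] at h
  have h2 := mul_self_le_mul_self (norm_nonneg _) h
  calc (M *ᵥ x) ⬝ᵥ (M *ᵥ x) = ‖(WithLp.equiv 2 (m → ℝ)).symm (M *ᵥ x)‖ ^ 2 :=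
        (norm_sq_eq_dot _).symm
    _ ≤ (specNorm M * ‖(WithLp.equiv 2 (m → ℝ)).symm x‖) ^ 2 := by
        rw [pow_two, pow_two]; exact h2
    _ = specNorm M ^ 2 * (x ⬝ᵥ x) := by
        rw [mul_pow, norm_sq_eq_dot]

lemma dot_mulVec_le (M : Matrix m m ℝ) (x : m → ℝ) :
    x ⬝ᵥ (M *ᵥ x) ≤ specNorm M * (x ⬝ᵥ x) := by
  have h := real_inner_le_norm ((WithLp.equiv 2 (m → ℝ)).symm x)
    ((WithLp.equiv 2 (m → ℝ)).symm (M *ᵥ x))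
  rw [inner_eq_dot] at h
  have hb := (LinearMap.toContinuousLinearMap (Matrix.toEuclideanLin M)).le_opNorm
    ((WithLp.equiv 2 (m → ℝ)).symm x)
  have he : (LinearMap.toContinuousLinearMap (Matrix.toEuclideanLin M))
      ((WithLp.equiv 2 (m → ℝ)).symm x) = (WithLp.equiv 2 (m → ℝ)).symm (M *ᵥ x) := rfl
  rw [he] at hb
  calc x ⬝ᵥ (M *ᵥ x)
      ≤ ‖(WithLp.equiv 2 (m → ℝ)).symm x‖ * ‖(WithLp.equiv 2 (m → ℝ)).symm (M *ᵥ x)‖ := h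
    _ ≤ ‖(WithLp.equiv 2 (m → ℝ)).symm x‖ *
        (specNorm M * ‖(WithLp.equiv 2 (m → ℝ)).symm x‖) :=
        mul_le_mul_of_nonneg_left hb (norm_nonneg _)
    _ = specNorm M * (x ⬝ᵥ x) := by
        rw [← norm_sq_eq_dot]; ring

end Aux


/-- For A symmetric positive definite, W = A₁₁⁻¹A₁₂ satisfies
‖W‖₂² ≤ ‖A₁₁⁻¹‖₂ ‖A₂₂‖₂. -/
theorem stmt13 {n : ℕ} (hn : 1 ≤ n)
    (A11 A12 A22 : Matrix (Fin n) (Fin n) ℝ)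
    (A : Matrix (Fin n ⊕ Fin n) (Fin n ⊕ Fin n) ℝ)
    (hA : A = fromBlocks A11 A12 A12ᵀ A22)
    (hpd : A.PosDef) :
    (specNorm (A11⁻¹ * A12)) ^ 2 ≤ specNorm A11⁻¹ * specNorm A22 := by
  subst hA
  -- A11 is positive definite
  have h11 : A11.PosDef := by
    rw [posDef_iff_dotProduct_mulVec]
    constructor
    · ext i j
      have := congrFun (congrFun hpd.1 (Sum.inl j)) (Sum.inl i)
      simpa [fromBlocks, conjTranspose_apply] using this.symm
    · intro x hx
      have hz : Sum.elim x (0 : Fin n → ℝ) ≠ 0 := by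
        intro h
        apply hx
        funext i
        exact congrFun h (Sum.inl i)
      have := (posDef_iff_dotProduct_mulVec.mp hpd).2 (x := Sum.elim x 0) hz
      simpa [star, fromBlocks_mulVec, sumElim_dotProduct_sumElim] using this
  have hinv : Invertible A11 := h11.isUnit.invertible
  -- Schur complement is PSD
  have hS : (A22 - A12ᵀ * A11⁻¹ * A12).PosSemidef := by
    have hct : A12ᴴ = A12ᵀ := by ext i j; simp [conjTranspose_apply]
    have := (Matrix.PosDef.fromBlocks₁₁ A12 A22 h11).mp (by rw [hct]; exact hpd.posSemidef)
    rwa [hct] at this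
  set B := A11⁻¹ with hBdef
  have hB : B.PosDef := h11.inv
  have hBps : B.PosSemidef := hB.posSemidef
  set C := (open scoped MatrixOrder in CFC.sqrt B) with hCdef
  have hC : C.PosSemidef := by open scoped MatrixOrder in exact (CFC.sqrt_nonneg B).posSemidef
  have hCC : C * C = B := by open scoped MatrixOrder in exact CFC.sqrt_mul_sqrt_self B hBps.nonneg
  have hCt : Cᵀ = C := by
    ext i j
    simpa [conjTranspose_apply] using congrFun (congrFun hC.1 i) j
  have hBt : Bᵀ = B := by
    ext i j
    simpa [conjTranspose_apply] using congrFun (congrFun hB.1 i) j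
  -- key pointwise bound
  have key : ∀ x : Fin n → ℝ,
      ((B * A12) *ᵥ x) ⬝ᵥ ((B * A12) *ᵥ x) ≤ (specNorm B * specNorm A22) * (x ⬝ᵥ x) := by
    intro x
    set z := A12 *ᵥ x with hz
    set y := C *ᵥ z with hy
    have hsq : ∀ w : Fin n → ℝ, (C *ᵥ w) ⬝ᵥ (C *ᵥ w) = w ⬝ᵥ (B *ᵥ w) := by
      intro w
      rw [dotProduct_mulVec, ← mulVec_transpose, hCt, mulVec_mulVec, hCC,
        dotProduct_comm, dotProduct_mulVec, ← mulVec_transpose, hBt]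
    have h1 : ((B * A12) *ᵥ x) ⬝ᵥ ((B * A12) *ᵥ x) = y ⬝ᵥ (B *ᵥ y) := by
      have : (B * A12) *ᵥ x = C *ᵥ y := by
        simp only [hy, hz, mulVec_mulVec, ← Matrix.mul_assoc, hCC]
      rw [this, hsq]
    have h2 : y ⬝ᵥ (B *ᵥ y) ≤ specNorm B * (y ⬝ᵥ y) := dot_mulVec_le B y
    have h3 : y ⬝ᵥ y = z ⬝ᵥ (B *ᵥ z) := hsq z
    have h4 : z ⬝ᵥ (B *ᵥ z) ≤ x ⬝ᵥ (A22 *ᵥ x) := by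
      have := (posSemidef_iff_dotProduct_mulVec.mp hS).2 x
      have hsx : star x = x := by funext i; simp
      rw [hsx, sub_mulVec, dotProduct_sub, sub_nonneg] at this
      have hzz : x ⬝ᵥ ((A12ᵀ * B * A12) *ᵥ x) = z ⬝ᵥ (B *ᵥ z) := by
        rw [Matrix.mul_assoc, ← mulVec_mulVec, dotProduct_mulVec, vecMul_transpose, hz,
          mulVec_mulVec]
      calc z ⬝ᵥ (B *ᵥ z) = x ⬝ᵥ ((A12ᵀ * B * A12) *ᵥ x) := hzz.symm
        _ ≤ x ⬝ᵥ (A22 *ᵥ x) := this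
    have h5 : x ⬝ᵥ (A22 *ᵥ x) ≤ specNorm A22 * (x ⬝ᵥ x) := dot_mulVec_le A22 x
    have hBn : (0:ℝ) ≤ specNorm B := norm_nonneg _
    calc ((B * A12) *ᵥ x) ⬝ᵥ ((B * A12) *ᵥ x) = y ⬝ᵥ (B *ᵥ y) := h1
      _ ≤ specNorm B * (y ⬝ᵥ y) := h2
      _ = specNorm B * (z ⬝ᵥ (B *ᵥ z)) := by rw [h3]
      _ ≤ specNorm B * (x ⬝ᵥ (A22 *ᵥ x)) := mul_le_mul_of_nonneg_left h4 hBn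
      _ ≤ specNorm B * (specNorm A22 * (x ⬝ᵥ x)) := mul_le_mul_of_nonneg_left h5 hBn
      _ = (specNorm B * specNorm A22) * (x ⬝ᵥ x) := by ring
  -- conclude
  set c := specNorm B * specNorm A22 with hcdef
  have hc : 0 ≤ c := mul_nonneg (norm_nonneg _) (norm_nonneg _)
  have hle : specNorm (B * A12) ≤ Real.sqrt c := by
    apply ContinuousLinearMap.opNorm_le_bound _ (Real.sqrt_nonneg c)
    intro u
    set x := WithLp.equiv 2 (Fin n → ℝ) u with hx
    have hu : (WithLp.equiv 2 (Fin n → ℝ)).symm x = u := rfl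
    have heq : (LinearMap.toContinuousLinearMap (Matrix.toEuclideanLin (B * A12))) u
        = (WithLp.equiv 2 (Fin n → ℝ)).symm ((B * A12) *ᵥ x) := rfl
    rw [heq]
    have h1 : ‖(WithLp.equiv 2 (Fin n → ℝ)).symm ((B * A12) *ᵥ x)‖ ^ 2 ≤ c * ‖u‖ ^ 2 := by
      rw [norm_sq_eq_dot, ← hu, norm_sq_eq_dot]
      exact key x
    have := Real.sqrt_le_sqrt h1
    rwa [Real.sqrt_sq (norm_nonneg _), Real.sqrt_mul hc, Real.sqrt_sq (norm_nonneg _)] at this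
  calc specNorm (B * A12) ^ 2 ≤ Real.sqrt c ^ 2 :=
        pow_le_pow_left₀ (norm_nonneg _) hle 2
    _ = c := Real.sq_sqrt hc
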